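/- Let t be a nonzero complex number, let r, s be integers, and set h := h^{ns}_{2,2}(t) = 3(t-1)²/(8t). Then for every complex number x: (x - h^{ns}_{r,s}(t))² - (2h/3 + 1)·(x + h^{ns}_{r,s}(t) + h/2 - 1/4) = (x - h^{ns}_{r+1,s-1}(t))·(x - h^{ns}_{r-1,s+1}(t)). -/

import Mathlib

/-- The `N=1` super Virasoro conformal weight
`h^{ns}_{r,s}(t) = ((r²-1)/8)·t - (rs-1)/4 + ((s²-1)/8)·t⁻¹`. -/
noncomputable def hns (t : ℂ) (r s : ℤ) : ℂ :=
  ((r : ℂ) ^ 2 - 1) / 8 * t - ((r : ℂ) * (s : ℂ) - 1) / 4 + ((s : ℂ) ^ 2 - 1) / 8 * t⁻¹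

lemma hns_eq (t : ℂ) (ht : t ≠ 0) (r s : ℤ) :
    hns t r s = (((r : ℂ) ^ 2 - 1) * t ^ 2 - 2 * ((r : ℂ) * s - 1) * t + ((s : ℂ) ^ 2 - 1)) / (8 * t) := by
  rw [hns, inv_eq_one_div]
  field_simp
  ring

/-- Factorization `g_{2,2}(x, h^{ns}_{r,s}) = (x - h^{ns}_{r+1,s-1})(x - h^{ns}_{r-1,s+1})`
of the Zhu bimodule polynomial `g_{2,2}(x,y) = (x-y)² - (2h/3+1)(x+y+h/2-1/4)`,
where `h = h^{ns}_{2,2}(t) = 3(t-1)²/(8t)`. -/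
theorem g22_factorization (t : ℂ) (ht : t ≠ 0) (r s : ℤ)
    (h : ℂ) (hh : h = 3 * (t - 1) ^ 2 / (8 * t)) :
    ∀ x : ℂ,
      (x - hns t r s) ^ 2 - (2 * h / 3 + 1) * (x + hns t r s + h / 2 - 1 / 4)
        = (x - hns t (r + 1) (s - 1)) * (x - hns t (r - 1) (s + 1)) := by
  intro x
  subst hh
  rw [hns_eq t ht r s, hns_eq t ht (r+1) (s-1), hns_eq t ht (r-1) (s+1)]
  have hu : t ^ 3 * t⁻¹ ^ 3 = 1 := by rw [← mul_pow, mul_inv_cancel₀ ht, one_pow]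
  push_cast
  field_simp
  ring
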